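/- Let 0 < λ ≤ Λ, α ≥ (Λ(n−1) − λ)/λ with α > 0, and 0 < a < b. Define M₂ = a^α/(b^α − a^α) and φ(x) = 1 + M₂ − M₂·|x|^{−α} on ℝⁿ \ {0}. Then φ(x) = 0 when |x| = a/b, φ(x) = 1 when |x| = 1, and M⁺(D²φ(x)) = M₂·α·|x|^{−α−2}·(Λ(n−1) − λ(α+1)) ≤ 0 for all x ≠ 0. -/

import Mathlib

open Matrix BigOperators

/-- The Hessian matrix of a function on Euclidean space. -/
noncomputable def hessian {n : ℕ} (φ : EuclideanSpace ℝ (Fin n) → ℝ)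
    (x : EuclideanSpace ℝ (Fin n)) : Matrix (Fin n) (Fin n) ℝ :=
  Matrix.of fun i j =>
    fderiv ℝ (fun y => fderiv ℝ φ y (EuclideanSpace.single j 1)) x (EuclideanSpace.single i 1)

noncomputable def pucciPlus (lam Lam : ℝ) {n : ℕ} (M : Matrix (Fin n) (Fin n) ℝ)
    (hM : M.IsHermitian) : ℝ :=
  lam * ∑ i, (if hM.eigenvalues i < 0 then hM.eigenvalues i else 0) +
  Lam * ∑ i, (if 0 < hM.eigenvalues i then hM.eigenvalues i else 0)

section aux
variable {n : ℕ}

private lemma hasFDerivAt_sumsq (x : EuclideanSpace ℝ (Fin n)) :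
    HasFDerivAt (fun y : EuclideanSpace ℝ (Fin n) => ∑ i, y i ^ 2)
      (∑ i, (2 * x i) • EuclideanSpace.proj (𝕜 := ℝ) i) x := by
  have h : ∀ i : Fin n, HasFDerivAt (fun y : EuclideanSpace ℝ (Fin n) => y i ^ 2)
      ((2 * x i) • EuclideanSpace.proj (𝕜 := ℝ) i) x := by
    intro i
    have h1 : HasFDerivAt (fun y : EuclideanSpace ℝ (Fin n) => y i)
        (EuclideanSpace.proj (𝕜 := ℝ) i) x := (EuclideanSpace.proj (𝕜 := ℝ) i).hasFDerivAt
    have h2 := h1.fun_mul h1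
    have e1 : (fun y : EuclideanSpace ℝ (Fin n) => y i * y i) = fun y => y i ^ 2 := by
      funext y; ring
    rw [e1] at h2
    rw [show (2 * x i) = x i + x i by ring, add_smul]
    exact h2
  exact HasFDerivAt.fun_sum fun i _ => h i

private lemma sumsq_apply (c : Fin n → ℝ) (j : Fin n) :
    (∑ i, c i • EuclideanSpace.proj (𝕜 := ℝ) i) (EuclideanSpace.single j (1:ℝ)) = c j := by
  simp [EuclideanSpace.single_apply]

private lemma norm_rpow_eq (y : EuclideanSpace ℝ (Fin n)) (β : ℝ) :
    ‖y‖ ^ (β : ℝ) = (∑ i, y i ^ 2) ^ (β/2 : ℝ) := by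
  have h1 : ‖y‖ = Real.sqrt (∑ i, y i ^ 2) := by
    rw [EuclideanSpace.norm_eq]
    congr 1
    exact Finset.sum_congr rfl fun i _ => by rw [Real.norm_eq_abs, sq_abs]
  have h2 : (0:ℝ) ≤ ∑ i, y i ^ 2 := Finset.sum_nonneg fun i _ => sq_nonneg _
  rw [h1, Real.sqrt_eq_rpow, ← Real.rpow_mul h2]
  congr 1; ring

private lemma sumsq_pos {y : EuclideanSpace ℝ (Fin n)} (hy : y ≠ 0) :
    0 < ∑ i, y i ^ 2 := by
  have h2 : (0:ℝ) ≤ ∑ i, y i ^ 2 := Finset.sum_nonneg fun i _ => sq_nonneg _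
  rcases h2.lt_or_eq with h | h
  · exact h
  · exfalso; apply hy
    have hn : ‖y‖ = 0 := by
      rw [EuclideanSpace.norm_eq, show (∑ i, ‖y i‖ ^ 2) = ∑ i, y i ^ 2 from
        Finset.sum_congr rfl fun i _ => by rw [Real.norm_eq_abs, sq_abs], ← h, Real.sqrt_zero]
    exact norm_eq_zero.mp hn

private lemma fderiv_phi {α M₂ : ℝ}
    {φ : EuclideanSpace ℝ (Fin n) → ℝ}
    (hφ : ∀ x : EuclideanSpace ℝ (Fin n), x ≠ 0 → φ x = 1 + M₂ - M₂ * ‖x‖ ^ (-α))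
    {y : EuclideanSpace ℝ (Fin n)} (hy : y ≠ 0) :
    fderiv ℝ φ y = ((-M₂) * ((-α/2) * (∑ i, y i ^ 2) ^ (-α/2 - 1 : ℝ))) •
      (∑ i, (2 * y i) • EuclideanSpace.proj (𝕜 := ℝ) i) := by
  set f := fun z : EuclideanSpace ℝ (Fin n) => ∑ i, z i ^ 2 with hf
  have hev : φ =ᶠ[nhds y] fun z => 1 + M₂ - M₂ * (f z) ^ (-α/2 : ℝ) := by
    have hopen : IsOpen {z : EuclideanSpace ℝ (Fin n) | z ≠ 0} := isOpen_compl_singleton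
    filter_upwards [hopen.mem_nhds hy] with z hz
    rw [hφ z hz, norm_rpow_eq]
  have hd : HasFDerivAt (fun z => 1 + M₂ - M₂ * (f z) ^ (-α/2 : ℝ))
      (((-M₂) * ((-α/2) * (f y) ^ (-α/2 - 1 : ℝ))) •
        (∑ i, (2 * y i) • EuclideanSpace.proj (𝕜 := ℝ) i)) y := by
    have hpow : HasFDerivAt (fun z => (f z) ^ (-α/2 : ℝ))
        (((-α/2) * (f y) ^ (-α/2 - 1 : ℝ)) •
          (∑ i, (2 * y i) • EuclideanSpace.proj (𝕜 := ℝ) i)) y := by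
      have := (Real.hasDerivAt_rpow_const (x := f y) (p := -α/2)
        (Or.inl (ne_of_gt (sumsq_pos hy)))).comp_hasFDerivAt y (hasFDerivAt_sumsq y)
      exact this
    have := ((hpow.const_mul M₂).const_sub (1 + M₂))
    refine this.congr_fderiv ?_
    rw [smul_smul, ← neg_smul]
    congr 1; ring
  rw [hev.fderiv_eq, hd.fderiv]

end aux

private lemma hessian_eq {α M₂ : ℝ}
    {φ : EuclideanSpace ℝ (Fin n) → ℝ}
    (hφ : ∀ x : EuclideanSpace ℝ (Fin n), x ≠ 0 → φ x = 1 + M₂ - M₂ * ‖x‖ ^ (-α))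
    {x : EuclideanSpace ℝ (Fin n)} (hx : x ≠ 0) :
    hessian φ x = Matrix.of fun i j =>
      M₂ * α * (∑ k, x k ^ 2) ^ (-α/2 - 1 : ℝ) * (if i = j then 1 else 0)
      - M₂ * α * (α+2) * (∑ k, x k ^ 2) ^ (-α/2 - 2 : ℝ) * (x i * x j) := by
  ext i j
  simp only [hessian, Matrix.of_apply]
  have hopen : IsOpen {z : EuclideanSpace ℝ (Fin n) | z ≠ 0} := isOpen_compl_singleton
  have hev : (fun y => fderiv ℝ φ y (EuclideanSpace.single j 1)) =ᶠ[nhds x]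
      fun y => (M₂ * α) * ((∑ k, y k ^ 2) ^ (-α/2 - 1 : ℝ) * y j) := by
    filter_upwards [hopen.mem_nhds hx] with z hz
    rw [fderiv_phi hφ hz]
    rw [ContinuousLinearMap.smul_apply, sumsq_apply, smul_eq_mul]
    ring
  rw [hev.fderiv_eq]
  have hq : HasFDerivAt (fun y : EuclideanSpace ℝ (Fin n) => (∑ k, y k ^ 2) ^ (-α/2 - 1 : ℝ))
      (((-α/2 - 1) * (∑ k, x k ^ 2) ^ (-α/2 - 2 : ℝ)) •
        (∑ k, (2 * x k) • EuclideanSpace.proj (𝕜 := ℝ) k)) x := by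
    have h := (Real.hasDerivAt_rpow_const (x := ∑ k, x k ^ 2) (p := -α/2 - 1)
      (Or.inl (ne_of_gt (sumsq_pos hx)))).comp_hasFDerivAt x (hasFDerivAt_sumsq x)
    have e : (-α/2 - 1 : ℝ) - 1 = -α/2 - 2 := by ring
    rw [e] at h
    exact h
  have hj : HasFDerivAt (fun y : EuclideanSpace ℝ (Fin n) => y j)
      (EuclideanSpace.proj (𝕜 := ℝ) j) x := (EuclideanSpace.proj (𝕜 := ℝ) j).hasFDerivAt
  have hfull := (hq.fun_mul hj).const_mul (M₂ * α)
  rw [hfull.fderiv]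
  simp only [ContinuousLinearMap.smul_apply, ContinuousLinearMap.add_apply,
    ContinuousLinearMap.sum_apply, ContinuousLinearMap.coe_smul', Pi.smul_apply,
    PiLp.proj_apply, EuclideanSpace.single_apply, smul_eq_mul, mul_ite, mul_one,
    mul_zero, Finset.sum_ite_eq, Finset.sum_ite_eq', Finset.mem_univ, if_true]
  rcases em (i = j) with h | h
  · subst h
    simp only [if_true]
    ring
  · rw [if_neg (show ¬ j = i from fun hji => h hji.symm), if_neg h]
    ring


private lemma pucci_aux {n : ℕ} (lam Lam : ℝ) (A : Matrix (Fin n) (Fin n) ℝ)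
    (hA : A.IsHermitian) (c₁ c₂ : ℝ) (h2 : c₂ < 0) (h1 : 0 < c₁)
    (hmin : (A - c₁ • 1) * (A - c₂ • 1) = 0)
    (htr : A.trace = ((n:ℝ) - 1) * c₁ + c₂) :
    lam * ∑ i, (if hA.eigenvalues i < 0 then hA.eigenvalues i else 0) +
    Lam * ∑ i, (if 0 < hA.eigenvalues i then hA.eigenvalues i else 0) =
    lam * c₂ + Lam * (((n:ℝ) - 1) * c₁) := by
  classical
  have key : ∀ i, hA.eigenvalues i = c₁ ∨ hA.eigenvalues i = c₂ := by
    intro i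
    have hmv := hA.mulVec_eigenvectorBasis i
    have e1 : (A - c₂ • (1 : Matrix (Fin n) (Fin n) ℝ)) *ᵥ ⇑(hA.eigenvectorBasis i)
        = (hA.eigenvalues i - c₂) • ⇑(hA.eigenvectorBasis i) := by
      rw [Matrix.sub_mulVec, Matrix.smul_mulVec, Matrix.one_mulVec, hmv, sub_smul]
    have e2 : ((A - c₁ • 1) * (A - c₂ • 1)) *ᵥ ⇑(hA.eigenvectorBasis i)
        = ((hA.eigenvalues i - c₁) * (hA.eigenvalues i - c₂)) • ⇑(hA.eigenvectorBasis i) := by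
      rw [← Matrix.mulVec_mulVec, e1, Matrix.mulVec_smul, Matrix.sub_mulVec,
        Matrix.smul_mulVec, Matrix.one_mulVec, hmv, ← sub_smul, smul_smul, mul_comm]
    rw [hmin, Matrix.zero_mulVec] at e2
    have hvne : ⇑(hA.eigenvectorBasis i) ≠ 0 := by
      have hne := hA.eigenvectorBasis.orthonormal.ne_zero i
      intro hc
      exact hne (by ext k; exact congrFun hc k)
    have hz := (smul_eq_zero.mp e2.symm).resolve_right hvne
    rcases mul_eq_zero.mp hz with h | h
    · exact Or.inl (sub_eq_zero.mp h)
    · exact Or.inr (sub_eq_zero.mp h)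
  have hsum : ∑ i, hA.eigenvalues i = A.trace := by
    have hst := hA.spectral_theorem
    have ht2 : A.trace = (Matrix.diagonal (RCLike.ofReal ∘ hA.eigenvalues)).trace := by
      conv_lhs => rw [hst]
      rw [Unitary.conjStarAlgAut_apply, Matrix.trace_mul_cycle, Unitary.coe_star_mul_self, Matrix.one_mul]
    rw [ht2, Matrix.trace_diagonal]
    simp
  set S := Finset.univ.filter (fun i => hA.eigenvalues i = c₂) with hS
  have hc12 : c₂ ≠ c₁ := ne_of_lt (h2.trans h1)
  have hmemS : ∀ i, i ∈ S ↔ hA.eigenvalues i = c₂ := by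
    intro i; simp [hS]
  have hnotS : ∀ i, i ∉ S → hA.eigenvalues i = c₁ := by
    intro i hi
    rcases key i with h | h
    · exact h
    · exact absurd ((hmemS i).mpr h) hi
  have hneg : (∑ i, (if hA.eigenvalues i < 0 then hA.eigenvalues i else 0))
      = (S.card : ℝ) * c₂ := by
    have hpt : ∀ i, (if hA.eigenvalues i < 0 then hA.eigenvalues i else 0)
        = (if i ∈ S then c₂ else 0) := by
      intro i
      by_cases hi : i ∈ S
      · rw [if_pos hi, (hmemS i).mp hi, if_pos h2]
      · rw [if_neg hi, hnotS i hi, if_neg (not_lt.mpr h1.le)]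
    rw [Finset.sum_congr rfl fun i _ => hpt i, Finset.sum_ite_mem, Finset.univ_inter,
      Finset.sum_const, nsmul_eq_mul]
  have hpos : (∑ i, (if 0 < hA.eigenvalues i then hA.eigenvalues i else 0))
      = ((n : ℝ) - S.card) * c₁ := by
    have hpt : ∀ i, (if 0 < hA.eigenvalues i then hA.eigenvalues i else 0)
        = (if i ∈ Sᶜ then c₁ else 0) := by
      intro i
      by_cases hi : i ∈ S
      · rw [(hmemS i).mp hi, if_neg (not_lt.mpr h2.le),
          if_neg (show i ∉ Sᶜ by simpa using hi)]
      · rw [hnotS i hi, if_pos h1, if_pos (Finset.mem_compl.mpr hi)]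
    rw [Finset.sum_congr rfl fun i _ => hpt i, Finset.sum_ite_mem, Finset.univ_inter,
      Finset.sum_const, nsmul_eq_mul, Finset.card_compl]
    have hle : S.card ≤ Fintype.card (Fin n) := S.card_le_univ
    rw [Nat.cast_sub hle, Fintype.card_fin]
  have hsum2 : ∑ i, hA.eigenvalues i = (S.card : ℝ) * c₂ + ((n:ℝ) - S.card) * c₁ := by
    have hpt : ∀ i, hA.eigenvalues i
        = (if hA.eigenvalues i < 0 then hA.eigenvalues i else 0)
          + (if 0 < hA.eigenvalues i then hA.eigenvalues i else 0) := by
      intro i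
      rcases key i with h | h <;> rw [h]
      · rw [if_neg (not_lt.mpr h1.le), if_pos h1, zero_add]
      · rw [if_pos h2, if_neg (not_lt.mpr h2.le), add_zero]
    rw [Finset.sum_congr rfl fun i _ => hpt i, Finset.sum_add_distrib, hneg, hpos]
  have hcard : (S.card : ℝ) = 1 := by
    rw [hsum, htr] at hsum2
    have hfac : ((S.card : ℝ) - 1) * (c₂ - c₁) = 0 := by linarith
    rcases mul_eq_zero.mp hfac with h | h
    · linarith
    · exact absurd (sub_eq_zero.mp h) hc12
  rw [hneg, hpos, hcard]
  ring

theorem stmt5 {n : ℕ} (lam Lam : ℝ) (hlam : 0 < lam) (hLam : lam ≤ Lam)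
    (α : ℝ) (hα : (Lam * ((n : ℝ) - 1) - lam) / lam ≤ α) (hα0 : 0 < α)
    (a b : ℝ) (ha : 0 < a) (hab : a < b)
    (M₂ : ℝ) (hM₂ : M₂ = a ^ α / (b ^ α - a ^ α))
    (φ : EuclideanSpace ℝ (Fin n) → ℝ)
    (hφ : ∀ x : EuclideanSpace ℝ (Fin n), x ≠ 0 → φ x = 1 + M₂ - M₂ * ‖x‖ ^ (-α)) :
    (∀ x : EuclideanSpace ℝ (Fin n), ‖x‖ = a / b → φ x = 0) ∧
    (∀ x : EuclideanSpace ℝ (Fin n), ‖x‖ = 1 → φ x = 1) ∧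
    (∀ x : EuclideanSpace ℝ (Fin n), x ≠ 0 →
      ∃ hH : (hessian φ x).IsHermitian,
        pucciPlus lam Lam (hessian φ x) hH =
          M₂ * α * ‖x‖ ^ (-α - 2) * (Lam * ((n : ℝ) - 1) - lam * (α + 1)) ∧
        M₂ * α * ‖x‖ ^ (-α - 2) * (Lam * ((n : ℝ) - 1) - lam * (α + 1)) ≤ 0) := by
  have hb : 0 < b := ha.trans hab
  have hapow : (0:ℝ) < a ^ α := Real.rpow_pos_of_pos ha α
  have hbpow : (0:ℝ) < b ^ α := Real.rpow_pos_of_pos hb α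
  have hdiff : (0:ℝ) < b ^ α - a ^ α :=
    sub_pos.mpr (Real.rpow_lt_rpow ha.le hab hα0)
  have hM₂pos : 0 < M₂ := by rw [hM₂]; exact div_pos hapow hdiff
  refine ⟨?_, ?_, ?_⟩
  · -- φ = 0 on ‖x‖ = a/b
    intro x hx
    have hab0 : (0:ℝ) < a / b := div_pos ha hb
    have hx0 : x ≠ 0 := by
      intro h; rw [h, norm_zero] at hx; linarith
    rw [hφ x hx0, hx, hM₂]
    rw [Real.rpow_neg hab0.le, Real.div_rpow ha.le hb.le]
    field_simp
    ring
  · -- φ = 1 on ‖x‖ = 1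
    intro x hx
    have hx0 : x ≠ 0 := by
      intro h; rw [h, norm_zero] at hx; norm_num at hx
    rw [hφ x hx0, hx, Real.one_rpow]
    ring
  · intro x hx
    set t : ℝ := ∑ k, x k ^ 2 with ht_def
    have ht : 0 < t := sumsq_pos hx
    set cc : ℝ := M₂ * α * t ^ (-α/2 - 1 : ℝ) with hcc_def
    set dd : ℝ := M₂ * α * (α+2) * t ^ (-α/2 - 2 : ℝ) with hdd_def
    have hccpos : 0 < cc := by
      exact mul_pos (mul_pos hM₂pos hα0) (Real.rpow_pos_of_pos ht _)
    have hddpos : 0 < dd := by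
      exact mul_pos (mul_pos (mul_pos hM₂pos hα0) (by linarith)) (Real.rpow_pos_of_pos ht _)
    have hddt : dd * t = (α + 2) * cc := by
      have h1 : t ^ (-α/2 - 1 : ℝ) = t ^ (-α/2 - 2 : ℝ) * t := by
        rw [← Real.rpow_add_one (ne_of_gt ht)]
        congr 1; ring
      rw [hcc_def, hdd_def, h1]; ring
    have hHe := hessian_eq hφ hx
    rw [hHe]
    set A : Matrix (Fin n) (Fin n) ℝ := Matrix.of fun i j =>
      M₂ * α * t ^ (-α/2 - 1 : ℝ) * (if i = j then 1 else 0)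
      - M₂ * α * (α+2) * t ^ (-α/2 - 2 : ℝ) * (x i * x j) with hA_def
    have hAentry : ∀ i j, A i j = cc * (if i = j then 1 else 0) - dd * (x i * x j) := by
      intro i j; rw [hA_def]; rfl
    have hH : A.IsHermitian := by
      ext i j
      rw [Matrix.conjTranspose_apply, hAentry, hAentry, star_trivial]
      rcases em (i = j) with h | h
      · subst h; ring
      · rw [if_neg h, if_neg (fun hji : j = i => h hji.symm)]; ring
    refine ⟨hH, ?_, ?_⟩
    · -- the Pucci computation
      set P : Matrix (Fin n) (Fin n) ℝ := Matrix.of fun i j => x i * x j with hP_def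
      have hAeq : A = cc • (1 : Matrix (Fin n) (Fin n) ℝ) - dd • P := by
        ext i j
        rw [hAentry, Matrix.sub_apply, Matrix.smul_apply, Matrix.smul_apply,
          Matrix.one_apply, hP_def, Matrix.of_apply, smul_eq_mul, smul_eq_mul]
      have hPP : P * P = t • P := by
        ext i j
        rw [Matrix.mul_apply, Matrix.smul_apply, smul_eq_mul]
        have : ∀ k, P i k * P k j = (x k * x k) * P i j := by
          intro k; rw [hP_def]; simp only [Matrix.of_apply]; ring
        rw [Finset.sum_congr rfl fun k _ => this k, ← Finset.sum_mul]
        congr 1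
        rw [ht_def]
        exact Finset.sum_congr rfl fun k _ => (sq (x k)).symm
      have hc2neg : -(α+1) * cc < 0 := by
        have : 0 < (α+1) * cc := mul_pos (by linarith) hccpos
        linarith
      have hmin : (A - cc • 1) * (A - (-(α+1) * cc) • 1) = 0 := by
        have e1 : A - cc • (1 : Matrix (Fin n) (Fin n) ℝ) = -(dd • P) := by
          rw [hAeq]; abel
        have e2 : A - (-(α+1) * cc) • (1 : Matrix (Fin n) (Fin n) ℝ) = (dd * t) • 1 - dd • P := by
          rw [hAeq, hddt]
          have : ((α + 2) * cc) • (1 : Matrix (Fin n) (Fin n) ℝ)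
              = cc • 1 - (-(α+1) * cc) • 1 := by
            rw [← sub_smul]; congr 1; ring
          rw [this]; abel
        rw [e1, e2, neg_mul, Matrix.smul_mul, Matrix.mul_sub, mul_smul_comm,
          Matrix.mul_one, mul_smul_comm, hPP, smul_smul,
          sub_self, smul_zero, neg_zero]
      have htr : A.trace = ((n:ℝ) - 1) * cc + (-(α+1) * cc) := by
        have hdiag : ∀ i, A i i = cc - dd * (x i * x i) := by
          intro i; rw [hAentry, if_pos rfl, mul_one]
        rw [Matrix.trace]
        have : ∀ i, Matrix.diag A i = cc - dd * (x i * x i) := fun i => hdiag i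
        rw [Finset.sum_congr rfl fun i _ => this i, Finset.sum_sub_distrib,
          Finset.sum_const, ← Finset.mul_sum, nsmul_eq_mul]
        have hsx : ∑ i, x i * x i = t := by
          rw [ht_def]; exact Finset.sum_congr rfl fun k _ => (sq (x k)).symm
        rw [hsx, hddt, Finset.card_univ, Fintype.card_fin]
        ring
      have := pucci_aux lam Lam A hH cc (-(α+1) * cc) hc2neg hccpos hmin htr
      rw [pucciPlus, this]
      have hnorm : ‖x‖ ^ (-α - 2 : ℝ) = t ^ (-α/2 - 1 : ℝ) := by
        rw [norm_rpow_eq, ← ht_def]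
        congr 1; ring
      rw [hnorm, hcc_def]
      ring
    · -- the sign
      have hfac : Lam * ((n : ℝ) - 1) - lam * (α + 1) ≤ 0 := by
        rw [div_le_iff₀ hlam] at hα
        nlinarith
      have hpos : 0 ≤ M₂ * α * ‖x‖ ^ (-α - 2 : ℝ) := by
        have : (0:ℝ) < ‖x‖ := norm_pos_iff.mpr hx
        positivity
      exact mul_nonpos_of_nonneg_of_nonpos hpos hfac
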